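/- Let C₀ ≥ 1, let a, b ∈ [1/C₀, C₀], u ∈ ℝ³, and set M(v) = a·exp(−‖v−u‖²/(2b)). Define the collision frequency ν(v) = ∫_{S²} ∫_{ℝ³} [M(v_*) · (1 + M(v))] / [(1 + M(v_*)) · (1 + M(v′)) · (1 + M(v_*′))] dv_* dσ(ω), where σ is the surface measure on the unit sphere S² ⊂ ℝ³ (total mass 4π) and v′ = v − ⟨v − v_*, ω⟩·ω, v_*′ = v_* + ⟨v − v_*, ω⟩·ω. Then for every v ∈ ℝ³, 8√2·π^{5/2} / (C₀^{5/2}·(1+C₀)³) ≤ ν(v) ≤ 8√2·π^{5/2}·C₀^{5/2}·(1+C₀). -/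

import Mathlib

open MeasureTheory

set_option maxHeartbeats 1000000 in
/-- Uniform two-sided bound on the collision frequency of the linearized fermionic
collision operator with collision kernel `B ≡ 1`: if `M v = a exp(-‖v-u‖²/(2b))` with
`a, b ∈ [1/C₀, C₀]`, and
`ν v = ∫_{S²} ∫_{ℝ³} M v_* (1 + M v) / ((1+M v_*)(1+M v')(1+M v_*')) dv_* dσ(ω)`
(with `σ` the surface measure `volume.toSphere` on `S²`, of total mass `4π`,
and `v' = v - ⟨v-v_*,ω⟩ω`, `v_*' = v_* + ⟨v-v_*,ω⟩ω`), then for every `v`,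
`8√2 π^{5/2} / (C₀^{5/2} (1+C₀)³) ≤ ν v ≤ 8√2 π^{5/2} C₀^{5/2} (1+C₀)`. -/
theorem collision_frequency_bounds (C₀ a b : ℝ) (hC₀ : 1 ≤ C₀)
    (ha : a ∈ Set.Icc (1 / C₀) C₀) (hb : b ∈ Set.Icc (1 / C₀) C₀)
    (u : EuclideanSpace ℝ (Fin 3)) (M : EuclideanSpace ℝ (Fin 3) → ℝ)
    (hM : ∀ v, M v = a * Real.exp (-‖v - u‖ ^ 2 / (2 * b)))
    (ν : EuclideanSpace ℝ (Fin 3) → ℝ)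
    (hν : ∀ v, ν v =
      ∫ ω : Metric.sphere (0 : EuclideanSpace ℝ (Fin 3)) 1,
        ∫ vs : EuclideanSpace ℝ (Fin 3),
          M vs * (1 + M v) /
            ((1 + M vs) *
              (1 + M (v - (inner ℝ (v - vs) (ω : EuclideanSpace ℝ (Fin 3)) : ℝ) •
                  (ω : EuclideanSpace ℝ (Fin 3)))) *
              (1 + M (vs + (inner ℝ (v - vs) (ω : EuclideanSpace ℝ (Fin 3)) : ℝ) •
                  (ω : EuclideanSpace ℝ (Fin 3)))))
        ∂(volume : Measure (EuclideanSpace ℝ (Fin 3)))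
        ∂((volume : Measure (EuclideanSpace ℝ (Fin 3))).toSphere)) :
    ∀ v : EuclideanSpace ℝ (Fin 3),
      8 * Real.sqrt 2 * Real.pi ^ ((5 : ℝ) / 2) / (C₀ ^ ((5 : ℝ) / 2) * (1 + C₀) ^ 3) ≤ ν v ∧
      ν v ≤ 8 * Real.sqrt 2 * Real.pi ^ ((5 : ℝ) / 2) * C₀ ^ ((5 : ℝ) / 2) * (1 + C₀) := by
  obtain ⟨ha1, ha2⟩ := ha
  obtain ⟨hb1, hb2⟩ := hb
  have hC0 : (0:ℝ) < C₀ := lt_of_lt_of_le one_pos hC₀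
  have hapos : 0 < a := lt_of_lt_of_le (by positivity) ha1
  have hbpos : 0 < b := lt_of_lt_of_le (by positivity) hb1
  have hC1 : (0:ℝ) < 1 + C₀ := by linarith
  have hpow3 : (0:ℝ) < (1 + C₀) ^ 3 := pow_pos hC1 3
  -- basic bounds on the Maxwellian
  have hMpos : ∀ w, 0 < M w := fun w => by rw [hM]; positivity
  have hMle : ∀ w, M w ≤ C₀ := by
    intro w
    rw [hM]
    have h1 : Real.exp (-‖w - u‖ ^ 2 / (2 * b)) ≤ 1 := by
      rw [Real.exp_le_one_iff]
      have : (0:ℝ) ≤ ‖w - u‖ ^ 2 := by positivity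
      have : (0:ℝ) < 2 * b := by positivity
      apply div_nonpos_of_nonpos_of_nonneg <;> nlinarith
    calc a * Real.exp (-‖w - u‖ ^ 2 / (2 * b)) ≤ a * 1 := by
          apply mul_le_mul_of_nonneg_left h1 hapos.le
      _ = a := mul_one a
      _ ≤ C₀ := ha2
  -- the Gaussian integral
  set A : ℝ := a * (2 * Real.pi * b) ^ ((3:ℝ)/2) with hAdef
  have hbb : (0:ℝ) < 1 / (2 * b) := by positivity
  have hrepr : M = fun w => a * Real.exp (-(1/(2*b)) * ‖w - u‖ ^ 2) := by
    funext w
    rw [hM, show -‖w - u‖ ^ 2 / (2 * b) = -(1/(2*b)) * ‖w - u‖ ^ 2 by ring]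
  have hMint_val : (∫ vs : EuclideanSpace ℝ (Fin 3), M vs) = A := by
    rw [hrepr, MeasureTheory.integral_const_mul,
      MeasureTheory.integral_sub_right_eq_self
        (fun w : EuclideanSpace ℝ (Fin 3) => Real.exp (-(1/(2*b)) * ‖w‖ ^ 2)) u,
      GaussianFourier.integral_rexp_neg_mul_sq_norm hbb, finrank_euclideanSpace_fin, hAdef]
    norm_num
    left
    rw [show Real.pi / (b⁻¹ * (1/2)) = 2 * Real.pi * b by field_simp]
  have hMintg : Integrable M := by
    have h1 : Integrable (fun v : EuclideanSpace ℝ (Fin 3) =>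
        Complex.exp (-(1/(2*b) : ℂ) * ‖v‖ ^ 2)) := by
      have := GaussianFourier.integrable_cexp_neg_mul_sq_norm_add
        (V := EuclideanSpace ℝ (Fin 3)) (b := (1/(2*b) : ℂ)) (by simpa using hbb) 0 0
      simpa using this
    have h2 := h1.norm
    have h3 : (fun v : EuclideanSpace ℝ (Fin 3) => ‖Complex.exp (-(1/(2*b) : ℂ) * ‖v‖ ^ 2)‖)
        = fun v : EuclideanSpace ℝ (Fin 3) => Real.exp (-(1/(2*b)) * ‖v‖ ^ 2) := by
      funext v
      rw [Complex.norm_exp]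
      norm_num
      left
      norm_cast
    rw [h3] at h2
    rw [hrepr]
    exact ((h2.comp_sub_right u).const_mul a)
  have hApos : 0 < A := by
    rw [hAdef]
    have : (0:ℝ) < 2 * Real.pi * b := by positivity
    positivity
  -- total mass of the sphere measure
  have hmass : ((volume : Measure (EuclideanSpace ℝ (Fin 3))).toSphere Set.univ).toReal
      = 4 * Real.pi := by
    rw [Measure.toSphere_apply_univ, EuclideanSpace.volume_ball]
    have h1 : Real.Gamma ((Fintype.card (Fin 3)) / 2 + 1) = 3/4 * Real.sqrt Real.pi := by
      norm_num
      rw [show (5:ℝ)/2 = 3/2 + 1 by norm_num, Real.Gamma_add_one (by norm_num)]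
      rw [show (3:ℝ)/2 = 1/2 + 1 by norm_num, Real.Gamma_add_one (by norm_num),
        Real.Gamma_one_half_eq]
      ring
    rw [h1]
    have h2 : Real.sqrt Real.pi ^ Fintype.card (Fin 3) / (3/4 * Real.sqrt Real.pi)
        = 4/3 * Real.pi := by
      have hs : Real.sqrt Real.pi > 0 := Real.sqrt_pos.mpr Real.pi_pos
      have hsq : Real.sqrt Real.pi ^ 2 = Real.pi := Real.sq_sqrt Real.pi_pos.le
      have h3 : Real.sqrt Real.pi ^ Fintype.card (Fin 3) = Real.pi * Real.sqrt Real.pi := by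
        rw [show Fintype.card (Fin 3) = 3 from rfl, pow_succ, hsq]
      rw [h3]
      field_simp
    rw [h2, finrank_euclideanSpace_fin]
    simp only [ENNReal.ofReal_one, one_pow, one_mul, ENNReal.toReal_mul, ENNReal.toReal_ofNat,
      Nat.cast_ofNat, ENNReal.toReal_ofReal (by positivity : (0:ℝ) ≤ 4/3 * Real.pi)]
    ring
  -- pointwise bound on the integrand, over reals
  have key : ∀ m n p q : ℝ, 0 < m → m ≤ C₀ → 0 < n → n ≤ C₀ → 0 < p → p ≤ C₀ →
      0 < q → q ≤ C₀ →
      m / (1+C₀)^3 ≤ m * (1+n) / ((1+m) * (1+p) * (1+q)) ∧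
      m * (1+n) / ((1+m) * (1+p) * (1+q)) ≤ m * (1+C₀) := by
    intro m n p q hm hm' hn hn' hp hp' hq hq'
    have h1 : (0:ℝ) < 1 + m := by linarith
    have h3 : (0:ℝ) < 1 + p := by linarith
    have h4 : (0:ℝ) < 1 + q := by linarith
    have hd : (0:ℝ) < (1+m) * (1+p) * (1+q) := mul_pos (mul_pos h1 h3) h4
    have hd1 : (1:ℝ) ≤ (1+m) * (1+p) * (1+q) := by
      calc (1:ℝ) = 1 * 1 * 1 := by ring
        _ ≤ (1+m) * (1+p) * (1+q) :=
          mul_le_mul (mul_le_mul (by linarith) (by linarith) zero_le_one h1.le)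
            (by linarith) zero_le_one (mul_nonneg h1.le h3.le)
    have hd2 : (1+m) * (1+p) * (1+q) ≤ (1+C₀)^3 := by
      calc (1+m) * (1+p) * (1+q) ≤ (1+C₀) * (1+C₀) * (1+C₀) :=
          mul_le_mul (mul_le_mul (by linarith) (by linarith) h3.le hC1.le)
            (by linarith) h4.le (mul_nonneg hC1.le hC1.le)
        _ = (1+C₀)^3 := by ring
    constructor
    · apply div_le_div₀ (by nlinarith) (by nlinarith) hd hd2
    · calc m * (1+n) / ((1+m) * (1+p) * (1+q)) ≤ m * (1+n) / 1 :=
          div_le_div₀ (by nlinarith) le_rfl one_pos hd1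
        _ = m * (1+n) := div_one _
        _ ≤ m * (1+C₀) := mul_le_mul_of_nonneg_left (by linarith) hm.le
  -- main part
  intro v
  set Φ : Metric.sphere (0 : EuclideanSpace ℝ (Fin 3)) 1 × EuclideanSpace ℝ (Fin 3) → ℝ :=
    fun p => M p.2 * (1 + M v) /
      ((1 + M p.2) *
        (1 + M (v - (inner ℝ (v - p.2) (p.1 : EuclideanSpace ℝ (Fin 3)) : ℝ) •
            (p.1 : EuclideanSpace ℝ (Fin 3)))) *
        (1 + M (p.2 + (inner ℝ (v - p.2) (p.1 : EuclideanSpace ℝ (Fin 3)) : ℝ) •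
            (p.1 : EuclideanSpace ℝ (Fin 3))))) with hΦ
  have hνv : ν v = ∫ ω : Metric.sphere (0 : EuclideanSpace ℝ (Fin 3)) 1,
      (∫ vs : EuclideanSpace ℝ (Fin 3), Φ (ω, vs))
      ∂((volume : Measure (EuclideanSpace ℝ (Fin 3))).toSphere) := by
    rw [hν v]
  -- pointwise bounds on Φ
  have hptlow : ∀ p, M p.2 / (1+C₀)^3 ≤ Φ p := by
    rintro ⟨x, y⟩
    simp only [hΦ]
    exact (key _ _ _ _ (hMpos _) (hMle _) (hMpos v) (hMle v) (hMpos _) (hMle _)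
      (hMpos _) (hMle _)).1
  have hptup : ∀ p, Φ p ≤ M p.2 * (1 + C₀) := by
    rintro ⟨x, y⟩
    simp only [hΦ]
    exact (key _ _ _ _ (hMpos _) (hMle _) (hMpos v) (hMle v) (hMpos _) (hMle _)
      (hMpos _) (hMle _)).2
  have hΦnonneg : ∀ p, 0 ≤ Φ p := fun p =>
    le_trans (div_nonneg (hMpos p.2).le hpow3.le) (hptlow p)
  -- continuity of Φ
  have hMcont : Continuous M := by
    rw [hrepr]; fun_prop
  have hc1 : Continuous (fun p : Metric.sphere (0 : EuclideanSpace ℝ (Fin 3)) 1 ×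
      EuclideanSpace ℝ (Fin 3) => (p.1 : EuclideanSpace ℝ (Fin 3))) :=
    continuous_subtype_val.comp continuous_fst
  have hc3 : Continuous (fun p : Metric.sphere (0 : EuclideanSpace ℝ (Fin 3)) 1 ×
      EuclideanSpace ℝ (Fin 3) =>
      (inner ℝ (v - p.2) (p.1 : EuclideanSpace ℝ (Fin 3)) : ℝ) •
        (p.1 : EuclideanSpace ℝ (Fin 3))) :=
    (Continuous.inner (𝕜 := ℝ) (continuous_const.sub continuous_snd : Continuous fun p :
      Metric.sphere (0 : EuclideanSpace ℝ (Fin 3)) 1 × EuclideanSpace ℝ (Fin 3) => v - p.2) hc1).smul hc1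
  have hcont : Continuous Φ := by
    rw [hΦ]
    apply Continuous.div
    · exact (hMcont.comp continuous_snd).mul continuous_const
    · exact (((continuous_const.add (hMcont.comp continuous_snd)).mul
        (continuous_const.add (hMcont.comp (continuous_const.sub hc3)))).mul
        (continuous_const.add (hMcont.comp (continuous_snd.add hc3))))
    · intro p
      have h1 := hMpos p.2
      have h2 := hMpos (v - (inner ℝ (v - p.2) ((p.1 : EuclideanSpace ℝ (Fin 3))) : ℝ) •
        (p.1 : EuclideanSpace ℝ (Fin 3)))
      have h3 := hMpos (p.2 + (inner ℝ (v - p.2) ((p.1 : EuclideanSpace ℝ (Fin 3))) : ℝ) •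
        (p.1 : EuclideanSpace ℝ (Fin 3)))
      exact (mul_pos (mul_pos (by linarith) (by linarith)) (by linarith)).ne'
  -- inner integral bounds
  have hinner : ∀ ω : Metric.sphere (0 : EuclideanSpace ℝ (Fin 3)) 1,
      Integrable (fun vs => Φ (ω, vs)) ∧
      A / (1+C₀)^3 ≤ (∫ vs, Φ (ω, vs)) ∧ (∫ vs, Φ (ω, vs)) ≤ A * (1 + C₀) := by
    intro ω
    have hcω : Continuous (fun vs => Φ (ω, vs)) :=
      hcont.comp (continuous_const.prodMk continuous_id)
    have hintω : Integrable (fun vs => Φ (ω, vs)) := by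
      apply Integrable.mono' (hMintg.mul_const (1 + C₀)) hcω.aestronglyMeasurable
      filter_upwards with vs
      rw [Real.norm_eq_abs, abs_of_nonneg (hΦnonneg (ω, vs))]
      exact hptup (ω, vs)
    refine ⟨hintω, ?_, ?_⟩
    · calc A / (1+C₀)^3 = ∫ vs, M vs / (1+C₀)^3 := by
            rw [integral_div, hMint_val]
        _ ≤ ∫ vs, Φ (ω, vs) :=
            integral_mono (hMintg.div_const _) hintω (fun vs => hptlow (ω, vs))
    · calc (∫ vs, Φ (ω, vs)) ≤ ∫ vs, M vs * (1 + C₀) :=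
            integral_mono hintω (hMintg.mul_const _) (fun vs => hptup (ω, vs))
        _ = A * (1 + C₀) := by rw [integral_mul_const, hMint_val]
  -- integrability of the outer integrand
  have hLnonneg : 0 ≤ A / (1+C₀)^3 := div_nonneg hApos.le hpow3.le
  have hFint : Integrable (fun ω : Metric.sphere (0 : EuclideanSpace ℝ (Fin 3)) 1 =>
      ∫ vs, Φ (ω, vs)) ((volume : Measure (EuclideanSpace ℝ (Fin 3))).toSphere) := by
    refine ⟨(hcont.stronglyMeasurable.integral_prod_right').aestronglyMeasurable, ?_⟩
    apply HasFiniteIntegral.of_bounded (C := A * (1 + C₀))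
    filter_upwards with ω
    rw [Real.norm_eq_abs, abs_of_nonneg (le_trans hLnonneg (hinner ω).2.1)]
    exact (hinner ω).2.2
  -- the two bounds
  have hνlow : 4 * Real.pi * (A / (1+C₀)^3) ≤ ν v := by
    rw [hνv]
    calc 4 * Real.pi * (A / (1+C₀)^3)
        = ∫ _ω : Metric.sphere (0 : EuclideanSpace ℝ (Fin 3)) 1, (A / (1+C₀)^3)
          ∂((volume : Measure (EuclideanSpace ℝ (Fin 3))).toSphere) := by
          rw [integral_const, Measure.real, hmass, smul_eq_mul]
      _ ≤ _ := integral_mono (integrable_const _) hFint (fun ω => (hinner ω).2.1)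
  have hνup : ν v ≤ 4 * Real.pi * (A * (1 + C₀)) := by
    rw [hνv]
    calc _ ≤ ∫ _ω : Metric.sphere (0 : EuclideanSpace ℝ (Fin 3)) 1, (A * (1 + C₀))
          ∂((volume : Measure (EuclideanSpace ℝ (Fin 3))).toSphere) :=
          integral_mono hFint (integrable_const _) (fun ω => (hinner ω).2.2)
      _ = 4 * Real.pi * (A * (1 + C₀)) := by rw [integral_const, Measure.real, hmass, smul_eq_mul]
  -- arithmetic with rpow
  have h2rt : (2:ℝ) ^ ((3:ℝ)/2) = 2 * Real.sqrt 2 := by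
    rw [show (3:ℝ)/2 = 1 + 1/2 by norm_num, Real.rpow_add two_pos, Real.rpow_one,
      ← Real.sqrt_eq_rpow]
  have hpi52 : Real.pi * Real.pi ^ ((3:ℝ)/2) = Real.pi ^ ((5:ℝ)/2) := by
    rw [show (5:ℝ)/2 = 1 + 3/2 by norm_num, Real.rpow_add Real.pi_pos, Real.rpow_one]
  have hC52 : C₀ * C₀ ^ ((3:ℝ)/2) = C₀ ^ ((5:ℝ)/2) := by
    rw [show (5:ℝ)/2 = 1 + 3/2 by norm_num, Real.rpow_add hC0, Real.rpow_one]
  have hC32pos : (0:ℝ) < C₀ ^ ((3:ℝ)/2) := Real.rpow_pos_of_pos hC0 _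
  constructor
  · -- lower bound
    have hA_lb : (1/C₀) * (2 * Real.pi / C₀) ^ ((3:ℝ)/2) ≤ A := by
      rw [hAdef]
      apply mul_le_mul ha1
        (Real.rpow_le_rpow (by positivity)
          (by rw [div_le_iff₀ hC0]; nlinarith [Real.pi_pos, mul_pos hbpos hC0,
            (div_le_iff₀ hC0).mp hb1]) (by norm_num))
        (Real.rpow_nonneg (by positivity) _) hapos.le
    have heq : 4 * Real.pi * ((1/C₀) * (2 * Real.pi / C₀) ^ ((3:ℝ)/2) / (1+C₀)^3)
        = 8 * Real.sqrt 2 * Real.pi ^ ((5:ℝ)/2) / (C₀ ^ ((5:ℝ)/2) * (1 + C₀) ^ 3) := by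
      rw [Real.div_rpow (by positivity) hC0.le,
        Real.mul_rpow (by norm_num) Real.pi_pos.le, h2rt, ← hpi52, ← hC52]
      field_simp
      ring
    calc 8 * Real.sqrt 2 * Real.pi ^ ((5:ℝ)/2) / (C₀ ^ ((5:ℝ)/2) * (1 + C₀) ^ 3)
        = 4 * Real.pi * ((1/C₀) * (2 * Real.pi / C₀) ^ ((3:ℝ)/2) / (1+C₀)^3) := heq.symm
      _ ≤ 4 * Real.pi * (A / (1+C₀)^3) := by
          exact mul_le_mul_of_nonneg_left ((div_le_div_iff_of_pos_right hpow3).mpr hA_lb) (by positivity)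
      _ ≤ ν v := hνlow
  · -- upper bound
    have hA_ub : A ≤ C₀ * (2 * Real.pi * C₀) ^ ((3:ℝ)/2) := by
      rw [hAdef]
      apply mul_le_mul ha2
        (Real.rpow_le_rpow (by positivity) (by nlinarith [Real.pi_pos]) (by norm_num))
        (Real.rpow_nonneg (by positivity) _) hC0.le
    have heq : 4 * Real.pi * ((C₀ * (2 * Real.pi * C₀) ^ ((3:ℝ)/2)) * (1 + C₀))
        = 8 * Real.sqrt 2 * Real.pi ^ ((5:ℝ)/2) * C₀ ^ ((5:ℝ)/2) * (1 + C₀) := by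
      rw [Real.mul_rpow (by positivity) hC0.le,
        Real.mul_rpow (by norm_num) Real.pi_pos.le, h2rt, ← hpi52, ← hC52]
      ring
    calc ν v ≤ 4 * Real.pi * (A * (1 + C₀)) := hνup
      _ ≤ 4 * Real.pi * ((C₀ * (2 * Real.pi * C₀) ^ ((3:ℝ)/2)) * (1 + C₀)) := by
          apply mul_le_mul_of_nonneg_left
            (mul_le_mul_of_nonneg_right hA_ub hC1.le) (by positivity)
      _ = 8 * Real.sqrt 2 * Real.pi ^ ((5:ℝ)/2) * C₀ ^ ((5:ℝ)/2) * (1 + C₀) := heq
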